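/- Fix constants d₀ ≥ 1, c_B ≥ 1, s ≥ 1, C > 0, k ≥ 0, c_D ≥ 1 and Q ≥ 6, and set λ = (2Q)^{d₀} c_B, β = log_Q 2 and α = c_D^{−β}. For each integer L ≥ c_D let (X_L, d_L) be a finite metric space with |X_L| ≤ C·L^k such that: (a) for every v ∈ X_L and all radii 0 < r < R there exists U ⊆ X_L with |U| ≤ c_B (R/r)^{d₀} and B_v(R) ⊆ ⋃_{u∈U} B_u(r); and (b) every ball of radius 1/2 in X_L contains at most s points. Let ε_L be a random subset of X_L in which each point is included independently with probability p, and let m*(L) = ⌈log_Q(L/c_D)⌉. If λ² s p < 1, then the probability that ε_L contains a level-m*(L) chunk is at most λ^{−2} · C·L^k · (λ² s p)^{α L^β}, and this probability tends to 0 as L → ∞. -/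

import Mathlib

open scoped ENNReal

/-- A level-`n` chunk of the error configuration `ε`. -/
def IsChunk {X : Type*} [MetricSpace X] (Q : ℝ) (ε : Set X) : ℕ → Set X → Prop
  | 0, C => ∃ x ∈ ε, C = {x}
  | n + 1, C => ∃ A B : Set X, IsChunk Q ε n A ∧ IsChunk Q ε n B ∧ Disjoint A B ∧
      C = A ∪ B ∧ Metric.diam C ≤ Q ^ (n + 1) / 2

/-- The Bernoulli(`p`) product measure: each point of `X` is included in the random subset
independently with probability `p` (for `p ∈ [0,1]`); a random subset is encoded as its
indicator function `f : X → Bool`, the subset being `{x | f x = true}`. -/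
noncomputable def bernoulliProduct (X : Type*) [Fintype X] (p : ℝ) :
    MeasureTheory.Measure (X → Bool) :=
  MeasureTheory.Measure.pi fun _ =>
    (PMF.bernoulli (min (Real.toNNReal p) 1) (min_le_right _ _)).toMeasure

namespace ChunkAux

/-- diameter bound for level-n chunks -/
noncomputable def diamB (Q : ℝ) : ℕ → ℝ
  | 0 => 0
  | n + 1 => Q ^ (n + 1) / 2

/-- covering radius used at level n -/
noncomputable def rad (Q : ℝ) : ℕ → ℝ
  | 0 => 1 / 2
  | n + 1 => Q ^ (n + 1) / 2

/-- ball radius containing level-n chunks -/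
noncomputable def rho (Q : ℝ) (n : ℕ) : ℝ := rad Q n + diamB Q n

variable {Y : Type*} [MetricSpace Y] {Q : ℝ} {ε : Set Y}

lemma chunk_subset : ∀ {n : ℕ} {T : Set Y}, IsChunk Q ε n T → T ⊆ ε
  | 0, T, ⟨x, hx, hT⟩ => by subst hT; simpa using hx
  | n + 1, T, ⟨A, B, hA, hB, _, hT, _⟩ => by
      subst hT; exact Set.union_subset (chunk_subset hA) (chunk_subset hB)

lemma chunk_mono {ε' : Set Y} (h : ε ⊆ ε') :
    ∀ {n : ℕ} {T : Set Y}, IsChunk Q ε n T → IsChunk Q ε' n T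
  | 0, T, ⟨x, hx, hT⟩ => ⟨x, h hx, hT⟩
  | n + 1, T, ⟨A, B, hA, hB, hd, hT, hdiam⟩ =>
      ⟨A, B, chunk_mono h hA, chunk_mono h hB, hd, hT, hdiam⟩

lemma chunk_finite : ∀ {n : ℕ} {T : Set Y}, IsChunk Q ε n T → T.Finite
  | 0, T, ⟨x, _, hT⟩ => by subst hT; exact Set.finite_singleton x
  | n + 1, T, ⟨A, B, hA, hB, _, hT, _⟩ => by
      subst hT; exact (chunk_finite hA).union (chunk_finite hB)

lemma chunk_ncard : ∀ {n : ℕ} {T : Set Y}, IsChunk Q ε n T → T.ncard = 2 ^ n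
  | 0, T, ⟨x, _, hT⟩ => by subst hT; simp
  | n + 1, T, ⟨A, B, hA, hB, hd, hT, _⟩ => by
      subst hT
      rw [Set.ncard_union_eq hd (chunk_finite hA) (chunk_finite hB),
        chunk_ncard hA, chunk_ncard hB]
      ring

lemma chunk_nonempty {n : ℕ} {T : Set Y} (h : IsChunk Q ε n T) : T.Nonempty := by
  rw [← Set.ncard_pos (chunk_finite h), chunk_ncard h]
  positivity

lemma chunk_diam (hQ : 0 ≤ Q) : ∀ {n : ℕ} {T : Set Y}, IsChunk Q ε n T →
    Metric.diam T ≤ diamB Q n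
  | 0, T, ⟨x, _, hT⟩ => by subst hT; simp [diamB]
  | n + 1, T, ⟨_, _, _, _, _, _, hdiam⟩ => hdiam

end ChunkAux

namespace ChunkAux

variable {Y : Type*} [MetricSpace Y]

lemma count_chunks [Fintype Y] (Q c_B d₀ s lam : ℝ) (hQ : 6 ≤ Q)
    (hd : 0 ≤ d₀) (hcB : 0 ≤ c_B) (hs : 0 ≤ s)
    (hlam : lam = (2 * Q) ^ d₀ * c_B) (hs1 : 0 ≤ lam)
    (hcover : ∀ (v : Y) (r R : ℝ), 0 < r → r < R →
      ∃ U : Finset Y, (U.card : ℝ) ≤ c_B * (R / r) ^ d₀ ∧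
        Metric.ball v R ⊆ ⋃ u ∈ U, Metric.ball (u : Y) r)
    (hball : ∀ v : Y, ((Metric.ball v (1 / 2 : ℝ)).ncard : ℝ) ≤ s) :
    ∀ (n : ℕ) (v : Y) (F : Finset (Finset Y)),
      (∀ T ∈ F, IsChunk Q Set.univ n (↑T : Set Y) ∧ (↑T : Set Y) ⊆ Metric.ball v (rho Q n)) →
      (F.card : ℝ) ≤ lam ^ (2 * 2 ^ n - 2) * s ^ (2 ^ n) := by
  classical
  have hQ0 : (0:ℝ) < Q := by linarith
  intro n
  induction n with
  | zero =>
    intro v F hF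
    have hsub : F ⊆ (Set.toFinite (Metric.ball v (1/2 : ℝ))).toFinset.image
        (fun x => ({x} : Finset Y)) := by
      intro T hT
      obtain ⟨⟨x, _, hTx⟩, hTsub⟩ := hF T hT
      have hTeq : T = {x} := by
        apply Finset.coe_injective; rw [hTx]; simp
      subst hTeq
      refine Finset.mem_image.2 ⟨x, ?_, rfl⟩
      rw [Set.Finite.mem_toFinset]
      have : x ∈ (↑({x} : Finset Y) : Set Y) := by simp
      have := hTsub this
      simpa [rho, rad, diamB] using this
    calc (F.card : ℝ) ≤ _ := Nat.cast_le.2 (Finset.card_le_card hsub)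
      _ ≤ ((Set.toFinite (Metric.ball v (1/2 : ℝ))).toFinset.card : ℝ) :=
          Nat.cast_le.2 Finset.card_image_le
      _ ≤ lam ^ (2 * 2 ^ 0 - 2) * s ^ (2 ^ 0) := by
          have := hball v
          rw [Set.ncard_eq_toFinset_card _ (Set.toFinite (Metric.ball v (1/2 : ℝ)))] at this
          simpa using this
  | succ n ih =>
    intro v F hF
    -- covering
    have hr0 : (0:ℝ) < rad Q n := by
      cases n <;> simp [rad] <;> positivity
    have h1 : rho Q (n+1) = Q ^ (n+1) := by simp [rho, rad, diamB]; try ring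
    have hradle : rad Q n ≤ Q ^ n / 2 := by
      cases n with
      | zero => simp [rad]
      | succ j => simp [rad]
    have hQnpos : (0:ℝ) < Q ^ n := by positivity
    have hrR : rad Q n < rho Q (n + 1) := by
      rw [h1, pow_succ]
      nlinarith
    obtain ⟨U, hUcard, hUcov⟩ := hcover v (rad Q n) (rho Q (n+1)) hr0 hrR
    have hratio : rho Q (n+1) / rad Q n = 2 * Q := by
      rw [h1]
      cases n with
      | zero =>
        show Q ^ (0+1) / (1/2 : ℝ) = 2 * Q
        rw [pow_one]; ring
      | succ j =>
        show Q ^ (j+1+1) / (Q ^ (j+1) / 2) = 2 * Q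
        have hQn : (Q:ℝ) ^ (j+1) ≠ 0 := by positivity
        rw [pow_succ]
        field_simp
    have hUlam : (U.card : ℝ) ≤ lam := by
      rw [hlam]; rw [hratio] at hUcard; linarith
    -- the finset of level-n chunks sitting in one of the covering balls
    set G : Finset (Finset Y) := Finset.univ.filter
      (fun T => IsChunk Q Set.univ n (↑T : Set Y) ∧
        ∃ u ∈ U, (↑T : Set Y) ⊆ Metric.ball u (rho Q n)) with hG
    -- key: F ⊆ image of union on G ×ˢ G
    have hsubmem : ∀ (A : Set Y), IsChunk Q Set.univ n A → A ⊆ Metric.ball v (rho Q (n+1)) →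
        (Set.toFinite A).toFinset ∈ G := by
      intro A hA hAsub
      rw [hG, Finset.mem_filter]
      refine ⟨Finset.mem_univ _, ?_, ?_⟩
      · rw [Set.Finite.coe_toFinset]; exact hA
      · obtain ⟨a, ha⟩ := chunk_nonempty hA
        obtain ⟨u, hu, hau⟩ := Set.mem_iUnion₂.1 (hUcov (hAsub ha))
        refine ⟨u, hu, ?_⟩
        rw [Set.Finite.coe_toFinset]
        intro x hx
        rw [Metric.mem_ball]
        have hdA : dist x a ≤ Metric.diam A :=
          Metric.dist_le_diam_of_mem (Set.Finite.isBounded (Set.toFinite A)) hx ha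
        have hdiam : Metric.diam A ≤ diamB Q n := chunk_diam hQ0.le hA
        have hau' : dist a u < rad Q n := Metric.mem_ball.1 hau
        calc dist x u ≤ dist x a + dist a u := dist_triangle x a u
          _ < diamB Q n + rad Q n := by linarith
          _ = rho Q n := by rw [rho]; ring
    have hFsub : F ⊆ (G ×ˢ G).image (fun P : Finset Y × Finset Y => P.1 ∪ P.2) := by
      intro T hT
      obtain ⟨⟨A, B, hA, hB, hdisj, hTeq, _⟩, hTsub⟩ := hF T hT
      have hAT : A ⊆ (↑T : Set Y) := by rw [hTeq]; exact Set.subset_union_left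
      have hBT : B ⊆ (↑T : Set Y) := by rw [hTeq]; exact Set.subset_union_right
      refine Finset.mem_image.2 ⟨((Set.toFinite A).toFinset, (Set.toFinite B).toFinset), ?_, ?_⟩
      · rw [Finset.mem_product]
        exact ⟨hsubmem A hA (hAT.trans hTsub), hsubmem B hB (hBT.trans hTsub)⟩
      · apply Finset.coe_injective
        push_cast [Set.Finite.coe_toFinset]
        rw [← hTeq]
    -- cardinality of G
    have hGcard : (G.card : ℝ) ≤ lam * (lam ^ (2 * 2 ^ n - 2) * s ^ (2 ^ n)) := by
      have hGsub : G ⊆ U.biUnion (fun u => Finset.univ.filter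
          (fun T : Finset Y => IsChunk Q Set.univ n (↑T : Set Y) ∧
            (↑T : Set Y) ⊆ Metric.ball u (rho Q n))) := by
        intro T hT
        rw [hG, Finset.mem_filter] at hT
        obtain ⟨_, hchunk, u, hu, hsub⟩ := hT
        exact Finset.mem_biUnion.2 ⟨u, hu, Finset.mem_filter.2 ⟨Finset.mem_univ _, hchunk, hsub⟩⟩
      calc (G.card : ℝ) ≤ _ := Nat.cast_le.2 (Finset.card_le_card hGsub)
        _ ≤ ((∑ u ∈ U, (Finset.univ.filter
            (fun T : Finset Y => IsChunk Q Set.univ n (↑T : Set Y) ∧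
              (↑T : Set Y) ⊆ Metric.ball u (rho Q n))).card : ℕ) : ℝ) :=
            Nat.cast_le.2 Finset.card_biUnion_le
        _ = ∑ u ∈ U, ((Finset.univ.filter
            (fun T : Finset Y => IsChunk Q Set.univ n (↑T : Set Y) ∧
              (↑T : Set Y) ⊆ Metric.ball u (rho Q n))).card : ℝ) := by push_cast; rfl
        _ ≤ ∑ u ∈ U, (lam ^ (2 * 2 ^ n - 2) * s ^ (2 ^ n)) := by
            apply Finset.sum_le_sum
            intro u _
            apply ih u
            intro T hT
            rw [Finset.mem_filter] at hT
            exact hT.2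
        _ = (U.card : ℝ) * (lam ^ (2 * 2 ^ n - 2) * s ^ (2 ^ n)) := by
            rw [Finset.sum_const, nsmul_eq_mul]
        _ ≤ lam * (lam ^ (2 * 2 ^ n - 2) * s ^ (2 ^ n)) := by
            apply mul_le_mul_of_nonneg_right hUlam (by positivity)
    -- combine
    have h2n : 1 ≤ 2 ^ n := Nat.one_le_two_pow
    calc (F.card : ℝ) ≤ _ := Nat.cast_le.2 (Finset.card_le_card hFsub)
      _ ≤ (((G ×ˢ G).card : ℕ) : ℝ) := Nat.cast_le.2 Finset.card_image_le
      _ = (G.card : ℝ) * (G.card : ℝ) := by rw [Finset.card_product]; push_cast; ring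
      _ ≤ (lam * (lam ^ (2 * 2 ^ n - 2) * s ^ (2 ^ n))) *
          (lam * (lam ^ (2 * 2 ^ n - 2) * s ^ (2 ^ n))) := by
          apply mul_le_mul hGcard hGcard (Nat.cast_nonneg _) (by positivity)
      _ = lam ^ (2 * 2 ^ (n+1) - 2) * s ^ (2 ^ (n+1)) := by
          have he : 2 * 2 ^ (n+1) - 2 = 1 + (2 * 2 ^ n - 2) + (1 + (2 * 2 ^ n - 2)) := by
            have : 2 ^ (n+1) = 2 * 2 ^ n := by ring
            omega
          have he2 : 2 ^ (n+1) = 2 ^ n + 2 ^ n := by ring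
          rw [he, he2, pow_add, pow_add, pow_add]
          ring

end ChunkAux


lemma bernoulli_all (Y : Type*) [Fintype Y] (p : ℝ) (hp0 : 0 ≤ p) (hp1 : p ≤ 1)
    (T : Finset Y) :
    bernoulliProduct Y p {f | ∀ x ∈ T, f x = true} = ENNReal.ofReal p ^ T.card := by
  classical
  have hq : min (Real.toNNReal p) 1 = Real.toNNReal p :=
    min_eq_left (Real.toNNReal_le_one.2 hp1)
  have hset : {f : Y → Bool | ∀ x ∈ T, f x = true} =
      Set.univ.pi (fun x => if x ∈ T then ({true} : Set Bool) else Set.univ) := by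
    ext f
    simp only [Set.mem_setOf_eq, Set.mem_pi, Set.mem_univ, true_implies]
    constructor
    · intro h x
      split
      · simp [h x ‹_›]
      · trivial
    · intro h x hx
      have := h x
      rw [if_pos hx] at this
      simpa using this
  rw [bernoulliProduct, hset, MeasureTheory.Measure.pi_pi]
  have hfac : ∀ x : Y,
      (PMF.bernoulli (min (Real.toNNReal p) 1) (min_le_right _ _)).toMeasure
        (if x ∈ T then ({true} : Set Bool) else Set.univ) =
      if x ∈ T then ENNReal.ofReal p else 1 := by
    intro x
    split
    · rw [PMF.toMeasure_apply_singleton _ _ (measurableSet_singleton _)]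
      simp [PMF.bernoulli, hq, ENNReal.ofReal]
    · exact MeasureTheory.measure_univ
  simp_rw [hfac]
  rw [Finset.prod_ite_mem, Finset.univ_inter, Finset.prod_const]

namespace ChunkAux

variable {Y : Type*} [MetricSpace Y]

lemma rad_pos {Q : ℝ} (hQ0 : 0 < Q) (n : ℕ) : 0 < rad Q n := by
  cases n <;> simp [rad] <;> positivity

lemma diamB_nonneg {Q : ℝ} (hQ0 : 0 < Q) (n : ℕ) : 0 ≤ diamB Q n := by
  cases n <;> simp [diamB] <;> positivity

lemma count_total [Fintype Y] (Q c_B d₀ s lam : ℝ) (hQ : 6 ≤ Q)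
    (hd : 0 ≤ d₀) (hcB : 0 ≤ c_B) (hs : 0 ≤ s)
    (hlam : lam = (2 * Q) ^ d₀ * c_B) (hlam0 : 0 ≤ lam)
    (hcover : ∀ (v : Y) (r R : ℝ), 0 < r → r < R →
      ∃ U : Finset Y, (U.card : ℝ) ≤ c_B * (R / r) ^ d₀ ∧
        Metric.ball v R ⊆ ⋃ u ∈ U, Metric.ball (u : Y) r)
    (hball : ∀ v : Y, ((Metric.ball v (1 / 2 : ℝ)).ncard : ℝ) ≤ s) (m : ℕ) :
    (({T : Finset Y | IsChunk Q Set.univ m (↑T : Set Y)}.ncard : ℕ) : ℝ)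
      ≤ (Fintype.card Y : ℝ) * (lam ^ (2 * 2 ^ m - 2) * s ^ (2 ^ m)) := by
  classical
  have hQ0 : (0:ℝ) < Q := by linarith
  rw [Set.ncard_eq_toFinset_card _ (Set.toFinite _)]
  have hsub : (Set.toFinite {T : Finset Y | IsChunk Q Set.univ m (↑T : Set Y)}).toFinset ⊆
      Finset.univ.biUnion (fun v : Y => Finset.univ.filter
        (fun T : Finset Y => IsChunk Q Set.univ m (↑T : Set Y) ∧
          (↑T : Set Y) ⊆ Metric.ball v (rho Q m))) := by
    intro T hT
    rw [Set.Finite.mem_toFinset, Set.mem_setOf_eq] at hT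
    have hchunk := hT
    obtain ⟨v, hv⟩ := chunk_nonempty hchunk
    refine Finset.mem_biUnion.2 ⟨v, Finset.mem_univ _, Finset.mem_filter.2
      ⟨Finset.mem_univ _, hchunk, ?_⟩⟩
    intro x hx
    rw [Metric.mem_ball]
    have h1 : dist x v ≤ Metric.diam (↑T : Set Y) :=
      Metric.dist_le_diam_of_mem (Set.Finite.isBounded (Set.toFinite _)) hx hv
    have h2 : Metric.diam (↑T : Set Y) ≤ diamB Q m := chunk_diam hQ0.le hchunk
    have h3 : 0 < rad Q m := rad_pos hQ0 m
    have : rho Q m = rad Q m + diamB Q m := rfl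
    linarith
  calc (((Set.toFinite {T : Finset Y | IsChunk Q Set.univ m (↑T : Set Y)}).toFinset.card : ℕ) : ℝ)
      ≤ _ := Nat.cast_le.2 (Finset.card_le_card hsub)
    _ ≤ ((∑ v : Y, (Finset.univ.filter
        (fun T : Finset Y => IsChunk Q Set.univ m (↑T : Set Y) ∧
          (↑T : Set Y) ⊆ Metric.ball v (rho Q m))).card : ℕ) : ℝ) :=
        Nat.cast_le.2 Finset.card_biUnion_le
    _ = ∑ v : Y, ((Finset.univ.filter
        (fun T : Finset Y => IsChunk Q Set.univ m (↑T : Set Y) ∧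
          (↑T : Set Y) ⊆ Metric.ball v (rho Q m))).card : ℝ) := by push_cast; rfl
    _ ≤ ∑ _v : Y, (lam ^ (2 * 2 ^ m - 2) * s ^ (2 ^ m)) := by
        apply Finset.sum_le_sum
        intro v _
        apply count_chunks Q c_B d₀ s lam hQ hd hcB hs hlam hlam0 hcover hball m v
        intro T hT
        rw [Finset.mem_filter] at hT
        exact hT.2
    _ = (Fintype.card Y : ℝ) * (lam ^ (2 * 2 ^ m - 2) * s ^ (2 ^ m)) := by
        rw [Finset.sum_const, nsmul_eq_mul, Finset.card_univ]

end ChunkAux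

namespace ChunkAux

variable {Y : Type*} [MetricSpace Y]

lemma chunk_prob [Fintype Y] (Q p : ℝ) (hp0 : 0 ≤ p) (hp1 : p ≤ 1) (m : ℕ) :
    bernoulliProduct Y p {f | ∃ Ch : Set Y, IsChunk Q {x | f x = true} m Ch}
      ≤ (({T : Finset Y | IsChunk Q Set.univ m (↑T : Set Y)}.ncard : ℕ) : ℝ≥0∞) *
        ENNReal.ofReal p ^ (2 ^ m) := by
  classical
  set Chunks := (Set.toFinite {T : Finset Y | IsChunk Q Set.univ m (↑T : Set Y)}).toFinset
    with hCdef
  have hevent : {f : Y → Bool | ∃ Ch : Set Y, IsChunk Q {x | f x = true} m Ch} ⊆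
      ⋃ T ∈ Chunks, {f : Y → Bool | ∀ x ∈ T, f x = true} := by
    rintro f ⟨Ch, hCh⟩
    have hfin : Ch.Finite := chunk_finite hCh
    have hmem : hfin.toFinset ∈ Chunks := by
      rw [hCdef, Set.Finite.mem_toFinset, Set.mem_setOf_eq, Set.Finite.coe_toFinset]
      exact chunk_mono (Set.subset_univ _) hCh
    refine Set.mem_biUnion hmem ?_
    intro x hx
    rw [Set.Finite.mem_toFinset] at hx
    exact chunk_subset hCh hx
  calc bernoulliProduct Y p {f | ∃ Ch : Set Y, IsChunk Q {x | f x = true} m Ch}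
      ≤ bernoulliProduct Y p (⋃ T ∈ Chunks, {f : Y → Bool | ∀ x ∈ T, f x = true}) :=
        MeasureTheory.measure_mono hevent
    _ ≤ ∑ T ∈ Chunks, bernoulliProduct Y p {f : Y → Bool | ∀ x ∈ T, f x = true} :=
        MeasureTheory.measure_biUnion_finset_le _ _
    _ = ∑ T ∈ Chunks, ENNReal.ofReal p ^ (2 ^ m) := by
        apply Finset.sum_congr rfl
        intro T hT
        rw [hCdef, Set.Finite.mem_toFinset, Set.mem_setOf_eq] at hT
        rw [bernoulli_all Y p hp0 hp1 T]
        congr 1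
        rw [← Set.ncard_coe_finset]
        exact chunk_ncard hT
    _ = ((Chunks.card : ℕ) : ℝ≥0∞) * ENNReal.ofReal p ^ (2 ^ m) := by
        rw [Finset.sum_const, nsmul_eq_mul]
    _ = _ := by
        rw [hCdef, ← Set.ncard_eq_toFinset_card _ (Set.toFinite _)]

end ChunkAux


open ChunkAux in
theorem statement9 (d₀ c_B s C k c_D Q p : ℝ)
    (hd : 1 ≤ d₀) (hcB : 1 ≤ c_B) (hs : 1 ≤ s) (hC : 0 < C) (hk : 0 ≤ k)
    (hcD : 1 ≤ c_D) (hQ : 6 ≤ Q) (hp0 : 0 ≤ p) (hp1 : p ≤ 1)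
    (lam β α : ℝ) (hlam : lam = (2 * Q) ^ d₀ * c_B)
    (hβ : β = Real.logb Q 2) (hα : α = c_D ^ (-β))
    (X : ℕ → Type*) [∀ L, MetricSpace (X L)] [∀ L, Fintype (X L)]
    (hcard : ∀ L : ℕ, c_D ≤ L → (Fintype.card (X L) : ℝ) ≤ C * (L : ℝ) ^ k)
    (hcover : ∀ L : ℕ, c_D ≤ L → ∀ (v : X L) (r R : ℝ), 0 < r → r < R →
      ∃ U : Finset (X L), (U.card : ℝ) ≤ c_B * (R / r) ^ d₀ ∧
        Metric.ball v R ⊆ ⋃ u ∈ U, Metric.ball (u : X L) r)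
    (hball : ∀ L : ℕ, c_D ≤ L → ∀ v : X L, ((Metric.ball v (1 / 2 : ℝ)).ncard : ℝ) ≤ s)
    (mStar : ℕ → ℕ) (hmStar : ∀ L : ℕ, mStar L = ⌈Real.logb Q ((L : ℝ) / c_D)⌉₊)
    (hsub : lam ^ 2 * s * p < 1) :
    (∀ L : ℕ, c_D ≤ L →
      bernoulliProduct (X L) p
        {f | ∃ Ch : Set (X L), IsChunk Q {x | f x = true} (mStar L) Ch} ≤
      ENNReal.ofReal ((lam ^ 2)⁻¹ * (C * (L : ℝ) ^ k) *
        (lam ^ 2 * s * p) ^ (α * (L : ℝ) ^ β))) ∧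
    Filter.Tendsto (fun L : ℕ =>
      bernoulliProduct (X L) p
        {f | ∃ Ch : Set (X L), IsChunk Q {x | f x = true} (mStar L) Ch})
      Filter.atTop (nhds 0) := by
  have hQ0 : (0:ℝ) < Q := by linarith
  have hQ1 : Q ≠ 1 := by intro h; rw [h] at hQ; linarith
  have hcD0 : (0:ℝ) < c_D := by linarith
  have hlam1 : (1:ℝ) ≤ lam := by
    rw [hlam]
    have h1 : (1:ℝ) ≤ (2*Q) ^ d₀ := by
      rw [← Real.rpow_zero (2*Q)]
      exact Real.rpow_le_rpow_of_exponent_le (by linarith) (by linarith)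
    nlinarith
  have hlam0 : (0:ℝ) < lam := by linarith
  have hlamne : lam ≠ 0 := ne_of_gt hlam0
  have hβ0 : (0:ℝ) < β := by
    rw [hβ]; exact Real.logb_pos (by linarith) one_lt_two
  have hα0 : (0:ℝ) < α := by
    rw [hα]; exact Real.rpow_pos_of_pos hcD0 _
  have hb0 : 0 ≤ lam ^ 2 * s * p := by positivity
  -- the first (quantitative) part
  have hmain : ∀ L : ℕ, c_D ≤ L →
      bernoulliProduct (X L) p
        {f | ∃ Ch : Set (X L), IsChunk Q {x | f x = true} (mStar L) Ch} ≤
      ENNReal.ofReal ((lam ^ 2)⁻¹ * (C * (L : ℝ) ^ k) *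
        (lam ^ 2 * s * p) ^ (α * (L : ℝ) ^ β)) := by
    intro L hL
    have hL1 : (1:ℝ) ≤ (L:ℝ) := hcD.trans hL
    have hLk0 : (0:ℝ) ≤ C * (L:ℝ) ^ k := by positivity
    set m := mStar L with hm
    set N := ({T : Finset (X L) | IsChunk Q Set.univ m (↑T : Set (X L))}.ncard : ℕ) with hN
    -- exponent comparison : α * L ^ β ≤ 2 ^ m
    have hexp : α * (L:ℝ) ^ β ≤ ((2 ^ m : ℕ) : ℝ) := by
      have hx0 : (0:ℝ) < (L:ℝ) / c_D := by positivity
      have h1 : α * (L:ℝ) ^ β = ((L:ℝ)/c_D) ^ β := by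
        rw [hα, Real.rpow_neg hcD0.le, Real.div_rpow (by linarith) hcD0.le]
        ring
      have h2 : ((L:ℝ)/c_D) ^ β = Q ^ (Real.logb Q ((L:ℝ)/c_D) * β) := by
        conv_lhs => rw [← Real.rpow_logb hQ0 hQ1 hx0]
        rw [← Real.rpow_mul hQ0.le]
      have h3 : Q ^ (Real.logb Q ((L:ℝ)/c_D) * β) ≤ Q ^ ((m : ℝ) * β) := by
        apply Real.rpow_le_rpow_of_exponent_le (by linarith)
        apply mul_le_mul_of_nonneg_right _ hβ0.le
        rw [hm, hmStar L]
        exact Nat.le_ceil _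
      have h4 : Q ^ ((m : ℝ) * β) = ((2 ^ m : ℕ) : ℝ) := by
        rw [mul_comm, Real.rpow_mul hQ0.le, hβ, Real.rpow_logb hQ0 hQ1 two_pos,
          Real.rpow_natCast]
        push_cast
        rfl
      rw [h1, h2, ← h4]
      exact h3
    -- real-number inequality
    have hreal : (N : ℝ) * p ^ (2 ^ m) ≤
        (lam ^ 2)⁻¹ * (C * (L:ℝ) ^ k) * (lam ^ 2 * s * p) ^ (α * (L:ℝ) ^ β) := by
      have hcount : (N : ℝ) ≤ (C * (L:ℝ) ^ k) * (lam ^ (2 * 2 ^ m - 2) * s ^ (2 ^ m)) := by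
        refine (count_total Q c_B d₀ s lam hQ (by linarith) (by linarith) (by linarith)
          hlam hlam0.le (hcover L hL) (hball L hL) m).trans ?_
        exact mul_le_mul_of_nonneg_right (hcard L hL) (by positivity)
      have hpow : (lam ^ 2 * s * p) ^ ((2 ^ m : ℕ)) ≤
          (lam ^ 2 * s * p) ^ (α * (L:ℝ) ^ β) := by
        rcases eq_or_lt_of_le hb0 with hb | hb
        · rw [← hb, zero_pow (by positivity), Real.zero_rpow]
          have : 0 < α * (L:ℝ) ^ β := by positivity
          linarith
        · rw [← Real.rpow_natCast (lam ^ 2 * s * p) (2 ^ m)]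
          exact Real.rpow_le_rpow_of_exponent_ge hb hsub.le hexp
      have halg : (C * (L:ℝ) ^ k) * (lam ^ (2 * 2 ^ m - 2) * s ^ (2 ^ m)) * p ^ (2 ^ m)
          = (lam ^ 2)⁻¹ * (C * (L:ℝ) ^ k) * (lam ^ 2 * s * p) ^ ((2 ^ m : ℕ)) := by
        have h2le : 2 ≤ 2 * 2 ^ m := by
          have : 1 ≤ 2 ^ m := Nat.one_le_two_pow
          omega
        rw [pow_sub₀ lam hlamne h2le, mul_pow, mul_pow, ← pow_mul]
        ring
      calc (N : ℝ) * p ^ (2 ^ m)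
          ≤ (C * (L:ℝ) ^ k) * (lam ^ (2 * 2 ^ m - 2) * s ^ (2 ^ m)) * p ^ (2 ^ m) :=
            mul_le_mul_of_nonneg_right hcount (by positivity)
        _ = (lam ^ 2)⁻¹ * (C * (L:ℝ) ^ k) * (lam ^ 2 * s * p) ^ ((2 ^ m : ℕ)) := halg
        _ ≤ _ := mul_le_mul_of_nonneg_left hpow (by positivity)
    calc bernoulliProduct (X L) p
          {f | ∃ Ch : Set (X L), IsChunk Q {x | f x = true} m Ch}
        ≤ ((N : ℕ) : ℝ≥0∞) * ENNReal.ofReal p ^ (2 ^ m) := chunk_prob Q p hp0 hp1 m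
      _ = ENNReal.ofReal ((N : ℝ) * p ^ (2 ^ m)) := by
          rw [ENNReal.ofReal_mul (Nat.cast_nonneg _), ENNReal.ofReal_natCast,
            ENNReal.ofReal_pow hp0]
      _ ≤ _ := ENNReal.ofReal_le_ofReal hreal
  refine ⟨hmain, ?_⟩
  -- the limit part
  set b := lam ^ 2 * s * p with hbdef
  have hgreal : Filter.Tendsto
      (fun L : ℕ => (lam ^ 2)⁻¹ * (C * (L:ℝ) ^ k) * b ^ (α * (L:ℝ) ^ β))
      Filter.atTop (nhds 0) := by
    rcases eq_or_lt_of_le hb0 with hb | hb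
    · apply Filter.Tendsto.congr' _ tendsto_const_nhds
      filter_upwards [Filter.eventually_atTop.2 ⟨1, fun L hL => hL⟩] with L hL
      have hL1 : (1:ℝ) ≤ (L:ℝ) := by exact_mod_cast hL
      have : 0 < α * (L:ℝ) ^ β := by positivity
      rw [← hb, Real.zero_rpow (ne_of_gt this), mul_zero]
    · have hlogb : Real.log b < 0 := Real.log_neg hb hsub
      set c : ℝ := α * (-Real.log b) with hc
      have hc0 : 0 < c := by
        rw [hc]; apply mul_pos hα0; linarith
      have h1 : Filter.Tendsto (fun L : ℕ => ((L:ℝ)) ^ β) Filter.atTop Filter.atTop :=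
        (tendsto_rpow_atTop hβ0).comp tendsto_natCast_atTop_atTop
      have h2 := (tendsto_rpow_mul_exp_neg_mul_atTop_nhds_zero (k / β) c hc0).comp h1
      have h3 := h2.const_mul ((lam ^ 2)⁻¹ * C)
      rw [mul_zero] at h3
      apply Filter.Tendsto.congr' _ h3
      filter_upwards [Filter.eventually_atTop.2 ⟨1, fun L hL => hL⟩] with L hL
      have hL0 : (0:ℝ) < (L:ℝ) := by exact_mod_cast hL
      have hLβ : ((L:ℝ) ^ β) ^ (k / β) = (L:ℝ) ^ k := by
        rw [← Real.rpow_mul hL0.le]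
        congr 1
        field_simp
      have hbr : b ^ (α * (L:ℝ) ^ β) = Real.exp (-c * ((L:ℝ) ^ β)) := by
        rw [Real.rpow_def_of_pos hb, hc]
        congr 1
        ring
      simp only [Function.comp_apply]
      rw [hLβ, hbr]
      ring
  have hg : Filter.Tendsto
      (fun L : ℕ => ENNReal.ofReal ((lam ^ 2)⁻¹ * (C * (L:ℝ) ^ k) * b ^ (α * (L:ℝ) ^ β)))
      Filter.atTop (nhds 0) := by
    have := ENNReal.tendsto_ofReal hgreal
    simpa using this
  apply tendsto_of_tendsto_of_tendsto_of_le_of_le' tendsto_const_nhds hg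
  · exact Filter.Eventually.of_forall fun _ => zero_le
  · filter_upwards [Filter.eventually_atTop.2 ⟨⌈c_D⌉₊, fun L hL => hL⟩] with L hL
    exact hmain L ((Nat.le_ceil c_D).trans (by exact_mod_cast hL))
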